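/- Let p be an odd prime, k ≥ 1, and let Q, t be integers with ord_p(t) < k, ord_p(Q) ≤ ord_p(t), ord_p(t) − ord_p(Q) even, and (cop_p(Q)·cop_p(t) / p) = 1. Then the number of solutions x ∈ Z/p^kZ of Q·x² ≡ t (mod p^k) is exactly 2·p^{(ord_p(t)+ord_p(Q))/2}. -/

import Mathlib

noncomputable def fiberEquiv {N M : ℕ} [NeZero M] (f : ZMod N →+* ZMod M) (P : ZMod M → Prop) :
    {y : ZMod N // P (f y)} ≃ {z : ZMod M // P z} × {w : ZMod N // f w = 0} where
  toFun y := (⟨f y.1, y.2⟩, ⟨y.1 - ((f y.1).val : ZMod N), by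
    rw [map_sub, map_natCast, ZMod.natCast_zmod_val, sub_self]⟩)
  invFun zw := ⟨((zw.1.1.val : ℕ) : ZMod N) + zw.2.1, by
    rw [map_add, map_natCast, ZMod.natCast_zmod_val, zw.2.2, add_zero]; exact zw.1.2⟩
  left_inv y := by
    apply Subtype.ext
    show ((f y.1).val : ZMod N) + (y.1 - ((f y.1).val : ZMod N)) = y.1
    abel
  right_inv zw := by
    have h1 : f (((zw.1.1.val : ℕ) : ZMod N) + zw.2.1) = zw.1.1 := by
      rw [map_add, map_natCast, ZMod.natCast_zmod_val, zw.2.2, add_zero]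
    ext
    · exact h1
    · show ((zw.1.1.val : ℕ) : ZMod N) + zw.2.1 - ((f (((zw.1.1.val : ℕ) : ZMod N) + zw.2.1)).val : ZMod N) = zw.2.1
      rw [h1]
      abel

lemma card_fiber {N M : ℕ} [NeZero N] [NeZero M] (f : ZMod N →+* ZMod M) (P : ZMod M → Prop) :
    Nat.card {y : ZMod N // P (f y)} =
      Nat.card {z : ZMod M // P z} * Nat.card {w : ZMod N // f w = 0} := by
  rw [Nat.card_congr (fiberEquiv f P), Nat.card_prod]

lemma card_ker {N M : ℕ} [NeZero N] [NeZero M] (f : ZMod N →+* ZMod M) :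
    M * Nat.card {w : ZMod N // f w = 0} = N := by
  have h := card_fiber f (fun _ => True)
  rw [Nat.card_congr (Equiv.subtypeUnivEquiv (fun _ => trivial)), Nat.card_zmod,
      Nat.card_congr (Equiv.subtypeUnivEquiv (fun _ => trivial)), Nat.card_zmod] at h
  exact h.symm

lemma exists_sqrt_mod_pow (p : ℕ) [hp : Fact p.Prime] (hodd : Odd p) (C : ℤ)
    (hCnd : ¬(p : ℤ) ∣ C) (hC : IsSquare (C : ZMod p)) :
    ∀ j, 1 ≤ j → ∃ s : ℤ, (p : ℤ) ^ j ∣ s ^ 2 - C := by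
  intro j hj
  induction j with
  | zero => omega
  | succ j ih =>
    rcases Nat.eq_or_lt_of_le hj with h1 | h1
    · -- base case j+1 = 1
      obtain ⟨r, hr⟩ := hC
      refine ⟨(r.val : ℤ), ?_⟩
      rw [← h1, pow_one]
      rw [← ZMod.intCast_zmod_eq_zero_iff_dvd]
      push_cast
      rw [ZMod.natCast_zmod_val, hr]
      ring
    · obtain ⟨s, hs⟩ := ih (by omega)
      have hps : ¬ (p : ℤ) ∣ s := by
        intro hd
        apply hCnd
        have h2 : (p : ℤ) ∣ s ^ 2 - C := dvd_trans (dvd_pow_self _ (by omega)) hs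
        have h3 : (p : ℤ) ∣ s ^ 2 := by rw [sq]; exact hd.mul_left s
        have := dvd_sub h3 h2
        simpa using this
      have h2s : ((2 * s : ℤ) : ZMod p) ≠ 0 := by
        rw [Ne, ZMod.intCast_zmod_eq_zero_iff_dvd]
        intro hd
        rcases (Int.Prime.dvd_mul' hp.1 hd) with h | h
        · norm_cast at h
          have := (Nat.prime_dvd_prime_iff_eq hp.1 Nat.prime_two).mp h
          rw [this] at hodd
          exact absurd hodd (by decide)
        · exact hps h
      set e : ℤ := (s ^ 2 - C) / (p : ℤ) ^ j with he_def
      have he : s ^ 2 - C = (p : ℤ) ^ j * e := (Int.mul_ediv_cancel' hs).symm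
      set u : ZMod p := (-(e : ZMod p)) * ((2 * s : ℤ) : ZMod p)⁻¹ with hu_def
      set w : ℤ := (u.val : ℤ) with hw_def
      refine ⟨s + (p : ℤ) ^ j * w, ?_⟩
      have key : (s + (p:ℤ)^j*w)^2 - C = (p:ℤ)^j * (e + 2*s*w) + ((p:ℤ)^j)^2 * w^2 := by
        linear_combination he
      rw [key]
      apply dvd_add
      · rw [pow_succ]
        apply mul_dvd_mul_left
        rw [← ZMod.intCast_zmod_eq_zero_iff_dvd]
        push_cast
        have hwu : ((w : ℤ) : ZMod p) = u := by
          rw [hw_def]; push_cast; rw [ZMod.natCast_val, ZMod.cast_id]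
        rw [hwu, hu_def]
        have : ((2 : ZMod p) * (s : ZMod p)) = ((2 * s : ℤ) : ZMod p) := by push_cast; ring
        rw [mul_comm ((2:ZMod p) * _)]
        calc (e : ZMod p) + (-(e:ZMod p) * ((2*s : ℤ): ZMod p)⁻¹) * ((2:ZMod p) * (s:ZMod p))
            = (e : ZMod p) + (-(e:ZMod p)) * (((2*s : ℤ): ZMod p)⁻¹ * ((2*s : ℤ): ZMod p)) := by
              rw [this]; ring
          _ = 0 := by rw [inv_mul_cancel₀ h2s]; ring
      · calc (p:ℤ)^(j+1) ∣ ((p:ℤ)^j)^2 := by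
              rw [← pow_mul]; exact pow_dvd_pow _ (by omega)
          _ ∣ ((p:ℤ)^j)^2 * w^2 := dvd_mul_right _ _

lemma zmod_isUnit_of_mod_p {p n : ℕ} [hp : Fact p.Prime] (hn : n ≠ 0)
    {w : ZMod (p ^ n)} (h : ZMod.castHom (dvd_pow_self p hn) (ZMod p) w ≠ 0) :
    IsUnit w := by
  haveI : NeZero (p ^ n) := ⟨pow_ne_zero _ hp.1.pos.ne'⟩
  have hc : ZMod.castHom (dvd_pow_self p hn) (ZMod p) w = ((w.val : ℕ) : ZMod p) := by
    conv_lhs => rw [← ZMod.natCast_zmod_val w]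
    rw [map_natCast]
  rw [hc, Ne, ZMod.natCast_eq_zero_iff] at h
  rw [← ZMod.natCast_zmod_val w, ZMod.isUnit_iff_coprime]
  exact (Nat.coprime_comm.mp (hp.1.coprime_iff_not_dvd.mpr h)).pow_right _

lemma card_unit_sq_eq {p n : ℕ} [hp : Fact p.Prime] (hodd : Odd p) (hn : n ≠ 0)
    (A B : ℤ) (hA : ¬ (p : ℤ) ∣ A) (hB : ¬ (p : ℤ) ∣ B)
    (hsq : ∃ d : ZMod (p ^ n), (A : ZMod (p ^ n)) * d ^ 2 = (B : ZMod (p ^ n))) :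
    Nat.card {z : ZMod (p ^ n) // (A : ZMod (p ^ n)) * z ^ 2 = (B : ZMod (p ^ n))} = 2 := by
  haveI : Fact (1 < p ^ n) := ⟨Nat.one_lt_pow hn hp.1.one_lt⟩
  obtain ⟨d, hd⟩ := hsq
  set φ := ZMod.castHom (dvd_pow_self p hn) (ZMod p) with hφ
  have hmapA : φ (A : ZMod (p ^ n)) = (A : ZMod p) := map_intCast φ A
  have hmapB : φ (B : ZMod (p ^ n)) = (B : ZMod p) := map_intCast φ B
  have hAu : IsUnit (A : ZMod (p ^ n)) := by
    apply zmod_isUnit_of_mod_p hn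
    rw [hmapA, Ne, ZMod.intCast_zmod_eq_zero_iff_dvd]; exact hA
  have hBu : IsUnit (B : ZMod (p ^ n)) := by
    apply zmod_isUnit_of_mod_p hn
    rw [hmapB, Ne, ZMod.intCast_zmod_eq_zero_iff_dvd]; exact hB
  have hdu : IsUnit d := by
    have : IsUnit ((A : ZMod (p ^ n)) * d * d) := by
      rw [show (A : ZMod (p ^ n)) * d * d = (A : ZMod (p ^ n)) * d ^ 2 by ring, hd]
      exact hBu
    exact isUnit_of_mul_isUnit_right this
  have h2u : IsUnit (2 : ZMod (p ^ n)) := by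
    apply zmod_isUnit_of_mod_p hn
    rw [map_ofNat, Ne, show ((2 : ZMod p) = ((2 : ℕ) : ZMod p)) by push_cast; ring,
      ZMod.natCast_eq_zero_iff]
    intro hdvd
    have := (Nat.prime_dvd_prime_iff_eq hp.1 Nat.prime_two).mp hdvd
    rw [this] at hodd
    exact absurd hodd (by decide)
  have h2du : IsUnit (2 * d) := h2u.mul hdu
  have hne : d ≠ -d := by
    intro hdd
    have : (2 : ZMod (p ^ n)) * d = 0 := by
      rw [two_mul]; nth_rewrite 2 [hdd]; ring
    exact h2du.ne_zero this
  have hset : ∀ z : ZMod (p ^ n), ((A : ZMod (p ^ n)) * z ^ 2 = (B : ZMod (p ^ n))) ↔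
      (z = d ∨ z = -d) := by
    intro z
    constructor
    · intro hz
      have hzd : (A : ZMod (p ^ n)) * (z ^ 2 - d ^ 2) = 0 := by
        rw [mul_sub, hz, hd, sub_self]
      have hzd2 : z ^ 2 - d ^ 2 = 0 := (hAu.mul_right_eq_zero).mp hzd
      have hf : (z - d) * (z + d) = 0 := by linear_combination hzd2
      by_cases hu : IsUnit (z - d)
      · right
        have := (hu.mul_right_eq_zero).mp hf
        linear_combination this
      · left
        have hφ0 : φ (z - d) = 0 := by
          by_contra hc; exact hu (zmod_isUnit_of_mod_p hn hc)
        have hφ2 : φ (z + d) ≠ 0 := by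
          have hrw : z + d = (z - d) + 2 * d := by ring
          rw [hrw, map_add, hφ0, zero_add]
          exact (h2du.map φ).ne_zero
        have hu2 : IsUnit (z + d) := zmod_isUnit_of_mod_p hn hφ2
        have := (hu2.mul_right_eq_zero).mp (by rw [mul_comm] at hf; exact hf)
        linear_combination this
    · rintro (rfl | rfl)
      · exact hd
      · rw [← hd]; ring
  rw [Nat.card_congr (Equiv.subtypeEquivRight hset)]
  have : {z : ZMod (p ^ n) // z = d ∨ z = -d} = ↥({d, -d} : Set (ZMod (p ^ n))) := rfl
  rw [this, Nat.card_coe_set_eq, Set.ncard_pair hne]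

/-- under the solvability conditions, Q·x² ≡ t (mod p^k) has
exactly 2·p^((ord_p(t)+ord_p(Q))/2) solutions. -/
theorem one_dim_count_odd_prime (p k : ℕ) [Fact p.Prime] (hodd : Odd p)
    (hk : 0 < k) (Q : ℤ) (hQ : Q ≠ 0) (t : ℕ) (ht : 0 < t) (htk : t < p ^ k)
    (hvt : padicValNat p t < k)
    (hle : padicValInt p Q ≤ padicValNat p t)
    (heven : Even (padicValNat p t - padicValInt p Q))
    (hleg : legendreSym p ((Q / (p : ℤ) ^ padicValInt p Q) *
      ((t / p ^ padicValNat p t : ℕ) : ℤ)) = 1) :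
    Nat.card {x : ZMod (p ^ k) // (Q : ZMod (p ^ k)) * x ^ 2 = (t : ZMod (p ^ k))} =
      2 * p ^ ((padicValNat p t + padicValInt p Q) / 2) := by
  have hp := (Fact.out : p.Prime)
  set a := padicValInt p Q with ha_def
  set b := padicValNat p t with hb_def
  set Q' : ℤ := Q / (p : ℤ) ^ a with hQ'_def
  set t' : ℕ := t / p ^ b with ht'_def
  set m := (b - a) / 2 with hm_def
  have h2m : 2 * m = b - a := Nat.mul_div_cancel' heven.two_dvd
  have hppos : 0 < p := hp.pos
  have hpZ : (p : ℤ) ≠ 0 := by exact_mod_cast hppos.ne'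
  haveI : NeZero (p ^ k) := ⟨pow_ne_zero _ hppos.ne'⟩
  haveI : NeZero (p ^ (k - m)) := ⟨pow_ne_zero _ hppos.ne'⟩
  haveI : NeZero (p ^ (k - b)) := ⟨pow_ne_zero _ hppos.ne'⟩
  have hmb : m ≤ b := by omega
  have hjne : k - b ≠ 0 := by omega
  have hQfac : (p : ℤ) ^ a * Q' = Q := Int.mul_ediv_cancel' (padicValInt_dvd Q)
  have htfac : p ^ b * t' = t := Nat.mul_div_cancel' pow_padicValNat_dvd
  have hQ'nd : ¬ (p : ℤ) ∣ Q' := by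
    intro hd
    have hd2 : (p : ℤ) ^ (a + 1) ∣ Q := by
      rw [← hQfac, pow_succ]
      exact mul_dvd_mul (dvd_refl _) hd
    rw [padicValInt_dvd_iff] at hd2
    rcases hd2 with h0 | h
    · exact hQ h0
    · omega
  have ht'nd : ¬ p ∣ t' := by
    intro hd
    have hd2 : p ^ (b + 1) ∣ t := by
      rw [← htfac, pow_succ]
      exact mul_dvd_mul (dvd_refl _) hd
    exact pow_succ_padicValNat_not_dvd ht.ne' hd2
  set f := ZMod.castHom (pow_dvd_pow p (by omega : k - b ≤ k - m)) (ZMod (p ^ (k - b))) with hf_def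
  -- the integer factorization identity
  have hfacZ : ∀ yv : ℕ, (Q * ((p : ℤ) ^ m * yv) ^ 2 - t) =
      (p : ℤ) ^ b * (Q' * (yv : ℤ) ^ 2 - (t' : ℤ)) := by
    intro yv
    have h1 : (p : ℤ) ^ a * ((p : ℤ) ^ m) ^ 2 = (p : ℤ) ^ b := by
      rw [← pow_mul, ← pow_add]; congr 1; omega
    have h2 : ((p : ℤ) ^ b) * (t' : ℤ) = (t : ℤ) := by exact_mod_cast htfac
    linear_combination (-(((p : ℤ) ^ m * yv) ^ 2)) * hQfac + h2 + (Q' * (yv : ℤ) ^ 2) * h1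
  have hkb : (p : ℤ) ^ k = (p : ℤ) ^ b * (p : ℤ) ^ (k - b) := by
    rw [← pow_add]; congr 1; omega
  have hbridge : ∀ yv : ℕ,
      ((Q : ZMod (p ^ k)) * ((p ^ m * yv : ℕ) : ZMod (p ^ k)) ^ 2 = (t : ZMod (p ^ k))) ↔
      ((Q' : ZMod (p ^ (k - b))) * ((yv : ℕ) : ZMod (p ^ (k - b))) ^ 2 =
        ((t' : ℤ) : ZMod (p ^ (k - b)))) := by
    intro yv
    have e1 : ((Q : ZMod (p ^ k)) * ((p ^ m * yv : ℕ) : ZMod (p ^ k)) ^ 2 = (t : ZMod (p ^ k))) ↔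
        (p : ℤ) ^ k ∣ (Q * ((p : ℤ) ^ m * yv) ^ 2 - t) := by
      rw [show (p : ℤ) ^ k = ((p ^ k : ℕ) : ℤ) by push_cast; ring,
        ← ZMod.intCast_zmod_eq_zero_iff_dvd]
      constructor
      · intro h
        push_cast
        rw [sub_eq_zero]
        push_cast at h
        exact h
      · intro h
        push_cast at h
        rw [sub_eq_zero] at h
        push_cast
        exact h
    have e2 : ((Q' : ZMod (p ^ (k - b))) * ((yv : ℕ) : ZMod (p ^ (k - b))) ^ 2 =
          ((t' : ℤ) : ZMod (p ^ (k - b)))) ↔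
        (p : ℤ) ^ (k - b) ∣ (Q' * (yv : ℤ) ^ 2 - (t' : ℤ)) := by
      rw [show (p : ℤ) ^ (k - b) = ((p ^ (k - b) : ℕ) : ℤ) by push_cast; ring,
        ← ZMod.intCast_zmod_eq_zero_iff_dvd]
      constructor
      · intro h
        push_cast
        rw [sub_eq_zero]
        push_cast at h
        exact h
      · intro h
        push_cast at h
        rw [sub_eq_zero] at h
        push_cast
        exact h
    rw [e1, e2, hfacZ yv, hkb]
    exact mul_dvd_mul_iff_left (pow_ne_zero b hpZ)
  -- the bijection
  have hmklt : p ^ m * p ^ (k - m) = p ^ k := by rw [← pow_add]; congr 1; omega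
  set g : {y : ZMod (p ^ (k - m)) //
      (Q' : ZMod (p ^ (k - b))) * (f y) ^ 2 = ((t' : ℤ) : ZMod (p ^ (k - b)))} →
      {x : ZMod (p ^ k) // (Q : ZMod (p ^ k)) * x ^ 2 = (t : ZMod (p ^ k))} := fun y =>
    ⟨((p ^ m * y.1.val : ℕ) : ZMod (p ^ k)), by
      apply (hbridge y.1.val).mpr
      have hfy : f y.1 = ((y.1.val : ℕ) : ZMod (p ^ (k - b))) := by
        conv_lhs => rw [← ZMod.natCast_zmod_val y.1]
        rw [map_natCast]
      have h2 := y.2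
      rw [hfy] at h2
      exact h2⟩ with hg_def
  have hginj : Function.Injective g := by
    rintro ⟨y1, h1⟩ ⟨y2, h2⟩ hgy
    have hv1 : p ^ m * y1.val < p ^ k := by
      calc p ^ m * y1.val < p ^ m * p ^ (k - m) :=
            (Nat.mul_lt_mul_left (pow_pos hppos m)).mpr (ZMod.val_lt y1)
        _ = p ^ k := hmklt
    have hv2 : p ^ m * y2.val < p ^ k := by
      calc p ^ m * y2.val < p ^ m * p ^ (k - m) :=
            (Nat.mul_lt_mul_left (pow_pos hppos m)).mpr (ZMod.val_lt y2)
        _ = p ^ k := hmklt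
    have heq : ((p ^ m * y1.val : ℕ) : ZMod (p ^ k)) = ((p ^ m * y2.val : ℕ) : ZMod (p ^ k)) :=
      congrArg Subtype.val hgy
    have heq2 := congrArg ZMod.val heq
    rw [ZMod.val_cast_of_lt hv1, ZMod.val_cast_of_lt hv2] at heq2
    have hval : y1.val = y2.val := Nat.eq_of_mul_eq_mul_left (pow_pos hppos m) heq2
    apply Subtype.ext
    show y1 = y2
    rw [← ZMod.natCast_zmod_val y1, ← ZMod.natCast_zmod_val y2, hval]
  have hgsurj : Function.Surjective g := by
    rintro ⟨x, hx⟩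
    have hxcast : ((x.val : ℕ) : ZMod (p ^ k)) = x := ZMod.natCast_zmod_val x
    have hdvdk : (p : ℤ) ^ k ∣ Q * (x.val : ℤ) ^ 2 - t := by
      rw [show (p : ℤ) ^ k = ((p ^ k : ℕ) : ℤ) by push_cast; ring,
        ← ZMod.intCast_zmod_eq_zero_iff_dvd]
      push_cast
      rw [hxcast, sub_eq_zero]
      exact hx
    have hx0 : x.val ≠ 0 := by
      intro h0
      rw [h0] at hdvdk
      simp only [Nat.cast_zero, ne_eq, OfNat.ofNat_ne_zero, not_false_eq_true, zero_pow,
        mul_zero, zero_sub, dvd_neg] at hdvdk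
      have hednat : p ^ k ∣ t := by exact_mod_cast hdvdk
      have := Nat.le_of_dvd ht hednat
      omega
    have hb2 : (p : ℤ) ^ b ∣ (t : ℤ) := by
      have : p ^ b ∣ t := ⟨t', htfac.symm⟩
      exact_mod_cast this
    have hb3 : (p : ℤ) ^ b ∣ Q * (x.val : ℤ) ^ 2 := by
      have h1 : (p : ℤ) ^ b ∣ Q * (x.val : ℤ) ^ 2 - t :=
        dvd_trans (pow_dvd_pow _ (by omega)) hdvdk
      have := dvd_add h1 hb2
      simpa using this
    have hb4 : (p : ℤ) ^ (2 * m) ∣ Q' * (x.val : ℤ) ^ 2 := by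
      have hsplit : (p : ℤ) ^ b = (p : ℤ) ^ a * (p : ℤ) ^ (2 * m) := by
        rw [← pow_add]; congr 1; omega
      have hmain : (p : ℤ) ^ a * (p : ℤ) ^ (2 * m) ∣ (p : ℤ) ^ a * (Q' * (x.val : ℤ) ^ 2) := by
        rw [← hsplit, show (p : ℤ) ^ a * (Q' * (x.val : ℤ) ^ 2) = Q * (x.val : ℤ) ^ 2 from by
          rw [← hQfac]; ring]
        exact hb3
      exact (mul_dvd_mul_iff_left (pow_ne_zero a hpZ)).mp hmain
    have hQ'ndnat : ¬ p ∣ Q'.natAbs := fun hdd => hQ'nd (Int.natCast_dvd.mpr hdd)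
    have hcopP : IsCoprime (p : ℤ) ((Q'.natAbs : ℕ) : ℤ) :=
      Nat.isCoprime_iff_coprime.mpr (hp.coprime_iff_not_dvd.mpr hQ'ndnat)
    have hcop : IsCoprime ((p : ℤ) ^ (2 * m)) Q' := by
      apply IsCoprime.pow_left
      rcases Int.natAbs_eq Q' with h | h
      · rw [h]; exact hcopP
      · rw [h]; exact hcopP.neg_right
    have hxv2 : (p : ℤ) ^ (2 * m) ∣ ((x.val : ℤ)) ^ 2 := hcop.dvd_of_dvd_mul_left hb4
    have hxvnat : p ^ (2 * m) ∣ x.val ^ 2 := by exact_mod_cast hxv2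
    have hmv : p ^ m ∣ x.val := by
      have h1 : 2 * m ≤ padicValNat p (x.val ^ 2) :=
        (padicValNat_dvd_iff_le (pow_ne_zero 2 hx0)).mp hxvnat
      rw [padicValNat.pow _ 2] at h1
      exact dvd_trans (pow_dvd_pow p (by omega)) pow_padicValNat_dvd
    have hxy : p ^ m * (x.val / p ^ m) = x.val := Nat.mul_div_cancel' hmv
    have hylt : x.val / p ^ m < p ^ (k - m) := by
      rw [Nat.div_lt_iff_lt_mul (pow_pos hppos m)]
      calc x.val < p ^ k := ZMod.val_lt x
        _ = p ^ (k - m) * p ^ m := by rw [← pow_add]; congr 1; omega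
    refine ⟨⟨(((x.val / p ^ m : ℕ)) : ZMod (p ^ (k - m))), ?_⟩, ?_⟩
    · show (Q' : ZMod (p ^ (k - b))) *
        (f (((x.val / p ^ m : ℕ)) : ZMod (p ^ (k - m)))) ^ 2 = ((t' : ℤ) : ZMod (p ^ (k - b)))
      rw [map_natCast]
      refine (hbridge (x.val / p ^ m)).mp ?_
      rw [hxy, hxcast]
      exact hx
    · apply Subtype.ext
      show ((p ^ m * (((x.val / p ^ m : ℕ)) : ZMod (p ^ (k - m))).val : ℕ) : ZMod (p ^ k)) = x
      rw [ZMod.val_cast_of_lt hylt, hxy, hxcast]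
  -- existence of a square root mod p^(k-b)
  have hCnd : ¬ (p : ℤ) ∣ Q' * (t' : ℤ) := by
    intro hd
    rcases Int.Prime.dvd_mul' hp hd with h | h
    · exact hQ'nd h
    · rw [Int.natCast_dvd_natCast] at h; exact ht'nd h
  have hC : IsSquare ((Q' * (t' : ℤ) : ℤ) : ZMod p) := by
    refine (legendreSym.eq_one_iff p ?_).mp hleg
    rw [Ne, ZMod.intCast_zmod_eq_zero_iff_dvd]
    exact hCnd
  obtain ⟨s, hs⟩ := exists_sqrt_mod_pow p hodd _ hCnd hC (k - b) (by omega)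
  have hQu : IsUnit (Q' : ZMod (p ^ (k - b))) := by
    apply zmod_isUnit_of_mod_p hjne
    rw [map_intCast, Ne, ZMod.intCast_zmod_eq_zero_iff_dvd]
    exact hQ'nd
  have hs2 : ((s : ZMod (p ^ (k - b)))) ^ 2 = ((Q' * (t' : ℤ) : ℤ) : ZMod (p ^ (k - b))) := by
    have hcast : ((s ^ 2 - Q' * (t' : ℤ) : ℤ) : ZMod (p ^ (k - b))) = 0 := by
      rw [ZMod.intCast_zmod_eq_zero_iff_dvd]
      exact_mod_cast hs
    push_cast at hcast
    rw [sub_eq_zero] at hcast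
    push_cast
    exact hcast
  have hsq : ∃ d : ZMod (p ^ (k - b)),
      (Q' : ZMod (p ^ (k - b))) * d ^ 2 = ((t' : ℤ) : ZMod (p ^ (k - b))) := by
    refine ⟨(s : ZMod (p ^ (k - b))) * ↑hQu.unit⁻¹, ?_⟩
    have h1 : (Q' : ZMod (p ^ (k - b))) * ↑hQu.unit⁻¹ = 1 := IsUnit.mul_val_inv hQu
    rw [mul_pow, hs2]
    push_cast
    linear_combination (((t' : ℕ) : ZMod (p ^ (k - b))) *
      ((Q' : ZMod (p ^ (k - b))) * ↑hQu.unit⁻¹ + 1)) * h1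
  have hcardT : Nat.card {z : ZMod (p ^ (k - b)) //
      (Q' : ZMod (p ^ (k - b))) * z ^ 2 = ((t' : ℤ) : ZMod (p ^ (k - b)))} = 2 :=
    card_unit_sq_eq hodd hjne Q' (t' : ℤ) hQ'nd
      (fun h => ht'nd (Int.natCast_dvd_natCast.mp h)) hsq
  -- kernel count
  have hkerc : Nat.card {w : ZMod (p ^ (k - m)) // f w = 0} = p ^ (b - m) := by
    have hker := card_ker f
    have h2 : p ^ (k - b) * p ^ (b - m) = p ^ (k - m) := by
      rw [← pow_add]; congr 1; omega
    exact Nat.eq_of_mul_eq_mul_left (pow_pos hppos _) (hker.trans h2.symm)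
  -- assembly
  have hA : Nat.card {x : ZMod (p ^ k) // (Q : ZMod (p ^ k)) * x ^ 2 = (t : ZMod (p ^ k))} =
      Nat.card {y : ZMod (p ^ (k - m)) //
        (Q' : ZMod (p ^ (k - b))) * (f y) ^ 2 = ((t' : ℤ) : ZMod (p ^ (k - b)))} :=
    (Nat.card_congr (Equiv.ofBijective g ⟨hginj, hgsurj⟩)).symm
  have hB : Nat.card {y : ZMod (p ^ (k - m)) //
        (Q' : ZMod (p ^ (k - b))) * (f y) ^ 2 = ((t' : ℤ) : ZMod (p ^ (k - b)))} =
      Nat.card {z : ZMod (p ^ (k - b)) //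
        (Q' : ZMod (p ^ (k - b))) * z ^ 2 = ((t' : ℤ) : ZMod (p ^ (k - b)))} *
      Nat.card {w : ZMod (p ^ (k - m)) // f w = 0} :=
    card_fiber f (fun z => (Q' : ZMod (p ^ (k - b))) * z ^ 2 = ((t' : ℤ) : ZMod (p ^ (k - b))))
  rw [hA, hB, hcardT, hkerc]
  congr 1
  congr 1
  omega
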